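/- Suppose f : ℝ^d → ℝ^d satisfies ‖f(x)‖ = λ·exp(|x_d| - 1) whenever |x_d| ≥ 1, where λ ≥ 1. Let x, y with ‖p(f^k(x)) - p(f^k(y))‖ ≤ 2√(d-1) for all k (where p projects to the first d-1 coordinates), and suppose all iterates have last coordinate of absolute value at least 1. Then there exists M > 0 (depending only on d and λ) such that: if |y_d^k| > |x_d^k| + M for some k (where x^k = f^k(x), y^k = f^k(y)), then |y_d^{k+1}| > (λ/3)·exp(|y_d^k|) + M ≥ 5|x_d^{k+1}| + M. -/

import Mathlib

open Real

def proj {d : ℕ} (hd : 2 ≤ d) (x : EuclideanSpace ℝ (Fin d)) :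
    EuclideanSpace ℝ (Fin (d - 1)) :=
  WithLp.toLp 2 (fun i : Fin (d - 1) => x ⟨(i : ℕ), by omega⟩)

lemma norm_sq_split {d : ℕ} (hd : 2 ≤ d) (w : EuclideanSpace ℝ (Fin d)) :
    ‖w‖ ^ 2 = ‖proj hd w‖ ^ 2 + (w ⟨d - 1, Nat.sub_one_lt (by omega)⟩) ^ 2 := by
  obtain ⟨n, rfl⟩ : ∃ n, d = n + 1 := ⟨d - 1, by omega⟩
  rw [EuclideanSpace.norm_eq, EuclideanSpace.norm_eq,
    Real.sq_sqrt (by positivity), Real.sq_sqrt (by positivity),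
    Fin.sum_univ_castSucc]
  simp [proj, Real.norm_eq_abs, sq_abs, Fin.last]
  rfl

lemma le_of_sq_le_sq' {a b : ℝ} (h : a ^ 2 ≤ b ^ 2) (ha : 0 ≤ a) (hb : 0 ≤ b) :
    a ≤ b := by nlinarith

lemma exp_one_bounds : (2.7 : ℝ) < Real.exp 1 ∧ Real.exp 1 < 2.72 := by
  constructor
  · have := Real.exp_one_gt_d9; norm_num at this ⊢; linarith
  · have := Real.exp_one_lt_d9; norm_num at this ⊢; linarith

lemma exp_nine_bound : (7000 : ℝ) < Real.exp 9 := by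
  have h : Real.exp 9 = Real.exp 1 ^ 9 := by
    rw [← Real.exp_nat_mul]; norm_num
  rw [h]
  calc (7000 : ℝ) < 2.7 ^ 9 := by norm_num
    _ < Real.exp 1 ^ 9 := by
      apply pow_lt_pow_left₀ exp_one_bounds.1 (by norm_num)
      norm_num

set_option maxHeartbeats 1000000 in
/-- The clean arithmetic core. -/
lemma arith_core (s M lam EM Ea E P Xd Yd e : ℝ)
    (hs0 : 0 ≤ s) (hM : M = s ^ 2 + 9) (hlam : 1 ≤ lam)
    (he1 : 2.7 < e) (he2 : e < 2.72)
    (hEM : (s ^ 2 + 1) * 7000 ≤ EM)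
    (hE : EM < E)
    (hEa : 0 < Ea)
    (hEaE : Ea * EM ≤ E)
    (hXd0 : 0 ≤ Xd) (hXdsq : Xd ^ 2 ≤ (lam * Ea) ^ 2)
    (hP0 : 0 ≤ P) (hPle : P ≤ lam * Ea + 2 * s)
    (hYd0 : 0 ≤ Yd) (hYdsq : Yd ^ 2 = (lam * E) ^ 2 - P ^ 2) :
    Yd > e / 3 * (lam * E) + M ∧ e / 3 * (lam * E) + M ≥ 5 * Xd + M := by
  set R := lam * E with hR
  clear_value R
  have hEpos : (0 : ℝ) < E := by nlinarith
  have hR0 : (0 : ℝ) < R := by nlinarith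
  have hRE : E ≤ R := by nlinarith
  have hEM7 : (7000 : ℝ) ≤ EM := by nlinarith [sq_nonneg s]
  have hlamEa : 0 < lam * Ea := by positivity
  have hXa : lam * Ea ≤ 1 / 7000 * R := by
    have h2 : lam * (Ea * EM) ≤ lam * E := by
      apply mul_le_mul_of_nonneg_left hEaE (by linarith)
    have h3 : 7000 * (lam * Ea) ≤ (lam * Ea) * EM := by
      apply (mul_le_mul_iff_right₀ hlamEa).mpr at hEM7
      linarith [mul_comm (lam * Ea) 7000]
    nlinarith
  have hXd : Xd ≤ 1 / 7000 * R := by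
    have := le_of_sq_le_sq' hXdsq hXd0 (le_of_lt hlamEa)
    linarith
  have hMR : M ≤ 9 / 7000 * R := by
    have h1 : M ≤ 9 * (s ^ 2 + 1) := by nlinarith [sq_nonneg s]
    have h2 : 9 * (s ^ 2 + 1) ≤ 9 / 7000 * EM := by linarith
    have h3 : EM ≤ R := by linarith
    linarith
  have hsM : s ≤ M := by nlinarith [sq_nonneg (s - 1)]
  have hPq : P ≤ 19 / 7000 * R := by
    have h1 : 2 * s ≤ 18 / 7000 * R := by linarith
    linarith
  constructor
  · set T := e / 3 * R + M with hT
    clear_value T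
    have hM0 : 0 < M := by nlinarith [sq_nonneg s]
    have he0 : (0:ℝ) < e := by linarith
    have hT0 : 0 ≤ T := by
      have := mul_pos he0 hR0
      rw [hT]; nlinarith
    have hTle : T ≤ (2.72 / 3 + 9 / 7000) * R := by
      have := mul_pos (show (0:ℝ) < 2.72 - e by linarith) hR0
      rw [hT]; nlinarith
    have hsq : T ^ 2 < Yd ^ 2 := by
      rw [hYdsq]
      have hP2 : P ^ 2 ≤ (19 / 7000) ^ 2 * R ^ 2 := by
        have h := mul_self_le_mul_self hP0 hPq
        nlinarith
      have hT2 : T ^ 2 ≤ (2.72 / 3 + 9 / 7000) ^ 2 * R ^ 2 := by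
        have h := mul_self_le_mul_self hT0 hTle
        nlinarith
      have hRR := pow_pos hR0 2
      nlinarith
    nlinarith [sq_nonneg (Yd - T), sq_nonneg (Yd + T)]
  · nlinarith [mul_pos (show (0:ℝ) < e - 2.7 by linarith) hR0]

theorem growth_lemma {d : ℕ} (hd : 2 ≤ d) (lam : ℝ) (hlam : 1 ≤ lam) :
    ∃ M : ℝ, 0 < M ∧
      ∀ f : EuclideanSpace ℝ (Fin d) → EuclideanSpace ℝ (Fin d),
        (∀ z : EuclideanSpace ℝ (Fin d), 1 ≤ |z ⟨d - 1, by omega⟩| →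
          ‖f z‖ = lam * exp (|z ⟨d - 1, by omega⟩| - 1)) →
        ∀ x y : EuclideanSpace ℝ (Fin d),
          (∀ k : ℕ, ‖proj hd (f^[k] x) - proj hd (f^[k] y)‖ ≤ 2 * Real.sqrt (d - 1)) →
          (∀ k : ℕ, 1 ≤ |(f^[k] x) ⟨d - 1, by omega⟩| ∧ 1 ≤ |(f^[k] y) ⟨d - 1, by omega⟩|) →
          ∀ k : ℕ,
            |(f^[k] y) ⟨d - 1, by omega⟩| > |(f^[k] x) ⟨d - 1, by omega⟩| + M →
            |(f^[k+1] y) ⟨d - 1, by omega⟩|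
                > lam / 3 * exp |(f^[k] y) ⟨d - 1, by omega⟩| + M ∧
            lam / 3 * exp |(f^[k] y) ⟨d - 1, by omega⟩| + M
                ≥ 5 * |(f^[k+1] x) ⟨d - 1, by omega⟩| + M := by
  refine ⟨(d : ℝ) + 8, by positivity, ?_⟩
  intro f hf x y hproj hone k hk
  set M : ℝ := (d : ℝ) + 8 with hMdef
  set s : ℝ := Real.sqrt ((d : ℝ) - 1) with hsdef
  have hs0 : 0 ≤ s := Real.sqrt_nonneg _
  have hs2 : s ^ 2 = (d : ℝ) - 1 := Real.sq_sqrt (by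
    have : (2:ℝ) ≤ (d:ℝ) := by exact_mod_cast hd
    linarith)
  have hM9 : M = s ^ 2 + 9 := by rw [hs2]; ring
  obtain ⟨ha1, hb1⟩ := hone k
  set a := |(f^[k] x) ⟨d - 1, by omega⟩| with hadef
  set b := |(f^[k] y) ⟨d - 1, by omega⟩| with hbdef
  have hx' : ‖f^[k+1] x‖ = lam * Real.exp (a - 1) := by
    rw [Function.iterate_succ_apply']; exact hf _ ha1
  have hy' : ‖f^[k+1] y‖ = lam * Real.exp (b - 1) := by
    rw [Function.iterate_succ_apply']; exact hf _ hb1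
  have hexpM : (s ^ 2 + 1) * 7000 ≤ Real.exp M := by
    rw [hM9, Real.exp_add]
    have h1 : s ^ 2 + 1 ≤ Real.exp (s ^ 2) := Real.add_one_le_exp _
    have h2 : (7000 : ℝ) ≤ Real.exp 9 := le_of_lt exp_nine_bound
    have h3 : (0:ℝ) < s ^ 2 + 1 := by positivity
    calc (s ^ 2 + 1) * 7000 ≤ Real.exp (s ^ 2) * Real.exp 9 :=
          mul_le_mul h1 h2 (by norm_num) (le_of_lt (Real.exp_pos _))
      _ = _ := rfl
  have hEM : Real.exp M < Real.exp (b - 1) := Real.exp_lt_exp.mpr (by linarith)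
  have hEaE : Real.exp (a - 1) * Real.exp M ≤ Real.exp (b - 1) := by
    rw [← Real.exp_add]
    exact Real.exp_le_exp.mpr (by linarith)
  -- coordinate facts
  have splitx := norm_sq_split hd (f^[k+1] x)
  have splity := norm_sq_split hd (f^[k+1] y)
  rw [hx'] at splitx
  rw [hy'] at splity
  set Xd := |(f^[k+1] x) ⟨d - 1, by omega⟩| with hXddef
  set Yd := |(f^[k+1] y) ⟨d - 1, by omega⟩| with hYddef
  have hXd0 : 0 ≤ Xd := abs_nonneg _
  have hYd0 : 0 ≤ Yd := abs_nonneg _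
  have hXdsq : Xd ^ 2 ≤ (lam * Real.exp (a - 1)) ^ 2 := by
    rw [hXddef, sq_abs]
    have := sq_nonneg ‖proj hd (f^[k+1] x)‖
    linarith
  set P := ‖proj hd (f^[k+1] y)‖ with hPdef
  have hP0 : 0 ≤ P := norm_nonneg _
  have hPx : ‖proj hd (f^[k+1] x)‖ ≤ lam * Real.exp (a - 1) := by
    apply le_of_sq_le_sq' _ (norm_nonneg _) (by positivity)
    have := sq_nonneg ((f^[k+1] x) ⟨d - 1, by omega⟩)
    linarith
  have hPle : P ≤ lam * Real.exp (a - 1) + 2 * s := by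
    have h1 := hproj (k + 1)
    have h2 : P - ‖proj hd (f^[k+1] x)‖ ≤ ‖proj hd (f^[k+1] x) - proj hd (f^[k+1] y)‖ := by
      rw [norm_sub_rev]
      exact (abs_le.mp (abs_norm_sub_norm_le _ _)).2
    rw [hsdef]
    linarith
  have hYdsq : Yd ^ 2 = (lam * Real.exp (b - 1)) ^ 2 - P ^ 2 := by
    rw [hYddef, sq_abs]
    linarith
  have hgoalrw : lam / 3 * Real.exp b = Real.exp 1 / 3 * (lam * Real.exp (b - 1)) := by
    rw [show b = 1 + (b - 1) by ring, Real.exp_add]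
    ring_nf
  have core := arith_core s M lam (Real.exp M) (Real.exp (a - 1)) (Real.exp (b - 1))
    P Xd Yd (Real.exp 1) hs0 hM9 hlam exp_one_bounds.1 exp_one_bounds.2
    hexpM hEM (Real.exp_pos _) hEaE hXd0 hXdsq hP0 hPle hYd0 hYdsq
  rw [hgoalrw]
  exact core
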